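/- Let a = max(0, b) be an accuracy function with b differentiable on (0, ∞). Let 0 < c_L < c_H be two marginal costs and let 0 < ε < c_H − c_L. Suppose m_H* > 0 maximizes a(m) − c_H·m with sup_{m ≥ 0}(a(m) − c_H·m) > 0, and m_L* > 0 maximizes a(m) − c_L·m with sup_{m ≥ 0}(a(m) − c_L·m) > 0. Fix Δ ≥ 0 and parameters m_H* ≤ m^↑ ≤ m^↓ with m^↓ + Δ ≥ m_L* and satisfying the matching condition a(m^↓ + Δ) − (c_L + ε)(m^↓ − m^↑) = a(m_H*) + (c_H + ε)(m^↑ − m_H*). Define the offer A(m) = a(m) for 0 ≤ m ≤ m_H*; A(m) = a(m_H*) + (c_H + ε)(m − m_H*) for m_H* ≤ m ≤ m^↑; A(m) = a(m^↓ + Δ) − (c_L + ε)(m^↓ − m) for m^↑ ≤ m ≤ m^↓; and A(m) = a(m + Δ) for m ≥ m^↓. Then: (i) m^↑ is a maximizer of m ↦ A(m) − c_H·m over [0, ∞); and (ii) m^↓ is a maximizer of m ↦ A(m) − c_L·m over [0, ∞). -/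

import Mathlib

open Set

/-- Key chord-slope lemma: past the low-cost optimizer, chords of `a` have
slope at most `cL`. -/
lemma accuracy_chord_slope_le
    (b a : ℝ → ℝ)
    (hb_mono : MonotoneOn b (Ici 0))
    (hb_conc : ConcaveOn ℝ (Ici 0) b)
    (ha_def : ∀ m, a m = max 0 (b m))
    (cL : ℝ) (hcL : 0 < cL)
    (mLstar : ℝ) (hmL_pos : 0 < mLstar)
    (hmL_max : IsMaxOn (fun m => a m - cL * m) (Ici 0) mLstar)
    (hsup : 0 < a mLstar - cL * mLstar)
    (x1 x2 : ℝ) (h1 : mLstar ≤ x1) (h12 : x1 ≤ x2) :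
    a x2 - a x1 ≤ cL * (x2 - x1) := by
  have hmemL : (mLstar : ℝ) ∈ Ici (0:ℝ) := le_of_lt hmL_pos
  have h10 : (0:ℝ) ≤ x1 := le_trans (le_of_lt hmL_pos) h1
  have h20 : (0:ℝ) ≤ x2 := le_trans h10 h12
  have haL_pos : 0 < a mLstar := by nlinarith
  have hbL : b mLstar = a mLstar := by
    have := ha_def mLstar
    rcases le_or_gt (b mLstar) 0 with h | h
    · rw [this, max_eq_left h] at haL_pos; linarith
    · rw [this, max_eq_right (le_of_lt h)]
  have hbL_pos : 0 < b mLstar := by rw [hbL]; exact haL_pos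
  have hb1_pos : 0 < b x1 := lt_of_lt_of_le hbL_pos (hb_mono hmemL h10 h1)
  have hb2_pos : 0 < b x2 := lt_of_lt_of_le hb1_pos (hb_mono h10 h20 h12)
  have ha1 : a x1 = b x1 := by rw [ha_def x1, max_eq_right (le_of_lt hb1_pos)]
  have ha2 : a x2 = b x2 := by rw [ha_def x2, max_eq_right (le_of_lt hb2_pos)]
  have hchord : b x2 - b mLstar ≤ cL * (x2 - mLstar) := by
    have hmax : a x2 - cL * x2 ≤ a mLstar - cL * mLstar :=
      hmL_max (show x2 ∈ Ici (0:ℝ) from h20)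
    linarith [ha2, hbL]
  rcases eq_or_lt_of_le h12 with rfl | hlt
  · simp
  · have hden : 0 < x2 - mLstar := lt_of_lt_of_le (by linarith) (le_refl _)
    set t := (x2 - x1) / (x2 - mLstar) with ht_def
    set s := (x1 - mLstar) / (x2 - mLstar) with hs_def
    have ht : 0 ≤ t := div_nonneg (by linarith) (le_of_lt hden)
    have hs : 0 ≤ s := div_nonneg (by linarith) (le_of_lt hden)
    have hts : t + s = 1 := by
      rw [ht_def, hs_def, ← add_div,
        show x2 - x1 + (x1 - mLstar) = x2 - mLstar by ring]
      exact div_self (ne_of_gt hden)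
    have hcomb : t * mLstar + s * x2 = x1 := by
      rw [ht_def, hs_def]
      field_simp
      ring
    have hconc := hb_conc.2 hmemL (show x2 ∈ Ici (0:ℝ) from h20) ht hs hts
    simp only [smul_eq_mul, hcomb] at hconc
    have htx : t * (x2 - mLstar) = x2 - x1 := by
      rw [ht_def]; exact div_mul_cancel₀ _ (ne_of_gt hden)
    rw [ha1, ha2]
    nlinarith [mul_le_mul_of_nonneg_left hchord ht]

/-- The accuracy-shaping menu under unverifiable costs: the
intended contribution `m^↑` is a best response for a high-cost agent, and
`m^↓` is a best response for a low-cost agent. -/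
theorem unverifiable_costs_best_responses
    (b a : ℝ → ℝ)
    (hb_cont : ContinuousOn b (Ici 0))
    (hb_mono : MonotoneOn b (Ici 0))
    (hb_conc : ConcaveOn ℝ (Ici 0) b)
    (hb_diff : ∀ m ∈ Ioi (0:ℝ), DifferentiableAt ℝ b m)
    (ha_def : ∀ m, a m = max 0 (b m))
    (ha_zero : a 0 = 0)
    (ha_le_one : ∀ m ∈ Ici (0:ℝ), a m ≤ 1)
    (cL cH ε : ℝ) (hcL : 0 < cL) (hcLH : cL < cH)
    (hε : 0 < ε) (hε_bound : ε < cH - cL)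
    (mHstar mLstar : ℝ) (hmH_pos : 0 < mHstar) (hmL_pos : 0 < mLstar)
    (hmH_max : IsMaxOn (fun m => a m - cH * m) (Ici 0) mHstar)
    (hmH_sup : ∃ m ∈ Ici (0:ℝ), 0 < a m - cH * m)
    (hmL_max : IsMaxOn (fun m => a m - cL * m) (Ici 0) mLstar)
    (hmL_sup : ∃ m ∈ Ici (0:ℝ), 0 < a m - cL * m)
    (Δ mup mdown : ℝ) (hΔ : 0 ≤ Δ)
    (hup_ge : mHstar ≤ mup) (hud : mup ≤ mdown) (hdown_ge : mLstar ≤ mdown + Δ)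
    (hmatch : a (mdown + Δ) - (cL + ε) * (mdown - mup)
      = a mHstar + (cH + ε) * (mup - mHstar))
    (A : ℝ → ℝ)
    (hA1 : ∀ m, 0 ≤ m → m ≤ mHstar → A m = a m)
    (hA2 : ∀ m, mHstar ≤ m → m ≤ mup →
      A m = a mHstar + (cH + ε) * (m - mHstar))
    (hA3 : ∀ m, mup ≤ m → m ≤ mdown →
      A m = a (mdown + Δ) - (cL + ε) * (mdown - m))
    (hA4 : ∀ m, mdown ≤ m → A m = a (m + Δ)) :
    IsMaxOn (fun m => A m - cH * m) (Ici 0) mup ∧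
    IsMaxOn (fun m => A m - cL * m) (Ici 0) mdown := by
  -- the value of the supremum at the low-cost optimum is positive
  have hsupL : 0 < a mLstar - cL * mLstar := by
    obtain ⟨m0, hm0, h0⟩ := hmL_sup
    exact lt_of_lt_of_le h0 (hmL_max hm0)
  -- chord slope lemma specialized
  have key : ∀ x1 x2 : ℝ, mLstar ≤ x1 → x1 ≤ x2 → a x2 - a x1 ≤ cL * (x2 - x1) :=
    fun x1 x2 h1 h12 =>
      accuracy_chord_slope_le b a hb_mono hb_conc ha_def cL hcL mLstar hmL_pos
        hmL_max hsupL x1 x2 h1 h12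
  -- values of the menu at the two intended points
  have hAup : A mup = a mHstar + (cH + ε) * (mup - mHstar) :=
    hA2 mup hup_ge (le_refl _)
  have hAdown : A mdown = a (mdown + Δ) := hA4 mdown (le_refl _)
  constructor
  · -- high-cost best response at mup
    intro m hm
    simp only [mem_Ici] at hm
    simp only [Set.mem_setOf_eq, hAup]
    rcases le_or_gt m mHstar with h1 | h1
    · -- region 1
      rw [hA1 m hm h1]
      have hH : a m - cH * m ≤ a mHstar - cH * mHstar :=
        hmH_max (show m ∈ Ici (0:ℝ) from hm)
      nlinarith [mul_nonneg hε.le (show (0:ℝ) ≤ mup - mHstar by linarith)]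
    · rcases le_or_gt m mup with h2 | h2
      · -- region 2
        rw [hA2 m (le_of_lt h1) h2]
        nlinarith
      · rcases le_or_gt m mdown with h3 | h3
        · -- region 3
          rw [hA3 m (le_of_lt h2) h3]
          nlinarith
        · -- region 4
          rw [hA4 m (le_of_lt h3)]
          have hk := key (mdown + Δ) (m + Δ) hdown_ge (by linarith)
          nlinarith
  · -- low-cost best response at mdown
    intro m hm
    simp only [mem_Ici] at hm
    simp only [Set.mem_setOf_eq, hAdown]
    rcases le_or_gt m mHstar with h1 | h1
    · -- region 1
      rw [hA1 m hm h1]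
      have hH : a m - cH * m ≤ a mHstar - cH * mHstar :=
        hmH_max (show m ∈ Ici (0:ℝ) from hm)
      nlinarith [mul_nonneg (show (0:ℝ) ≤ cH - cL by linarith) (show (0:ℝ) ≤ mHstar - m by linarith),
        mul_nonneg (show (0:ℝ) ≤ cH + ε - cL by linarith) (show (0:ℝ) ≤ mup - mHstar by linarith),
        mul_nonneg (le_of_lt hε) (show (0:ℝ) ≤ mdown - mup by linarith)]
    · rcases le_or_gt m mup with h2 | h2
      · -- region 2
        rw [hA2 m (le_of_lt h1) h2]
        nlinarith [mul_nonneg (show (0:ℝ) ≤ cH + ε - cL by linarith) (show (0:ℝ) ≤ mup - m by linarith),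
          mul_nonneg (le_of_lt hε) (show (0:ℝ) ≤ mdown - mup by linarith)]
      · rcases le_or_gt m mdown with h3 | h3
        · -- region 3
          rw [hA3 m (le_of_lt h2) h3]
          nlinarith [mul_nonneg (le_of_lt hε) (show (0:ℝ) ≤ mdown - m by linarith)]
        · -- region 4
          rw [hA4 m (le_of_lt h3)]
          have hk := key (mdown + Δ) (m + Δ) hdown_ge (by linarith)
          linarith
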